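/- Let g be the maximal transitive prolongation of an extended translation algebra m = V + W with dim V ≥ 3. For every non-isotropic v ∈ V, the map ψ defined on m by ψ(s) = v·s for s ∈ W and ψ(u) = ε(v,v)(u - 2(v,u)/(v,v) v) for u ∈ V is a degree-0 automorphism of the graded Lie algebra m. -/

import Mathlib

/-- for any non-isotropic `v ∈ V`, the map `ψ` defined by `ψ(s) = v·s`
on `W` and `ψ(u) = ε (v,v) (u - (2(v,u)/(v,v)) v)` on `V` is a degree-0 automorphism of
the graded Lie algebra `m = V + W`: it is bijective on each graded component and
preserves the bracket `[s,t] = br s t`. -/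
theorem psi_is_automorphism
    {K : Type*} [Field K]
    {V : Type*} [AddCommGroup V] [Module K V] [FiniteDimensional K V]
    {W : Type*} [AddCommGroup W] [Module K W]
    (B : V →ₗ[K] V →ₗ[K] K)
    (hBsymm : ∀ v u : V, B v u = B u v)
    (hBnd : ∀ v : V, (∀ u : V, B v u = 0) → v = 0)
    (cl : V →ₗ[K] W →ₗ[K] W)
    (hcl : ∀ (v : V) (s : W), cl v (cl v s) = -(B v v) • s)
    (bW : W →ₗ[K] W →ₗ[K] K)
    (hbWnd : ∀ s : W, (∀ t : W, bW s t = 0) → s = 0)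
    (ε : K) (hε : ε = 1 ∨ ε = -1)
    (hbWrefl : ∀ s t : W, bW s t = -(ε * bW t s))
    (hbWcl : ∀ (v : V) (s t : W), bW (cl v s) t = ε * bW s (cl v t))
    (br : W →ₗ[K] W →ₗ[K] V)
    (hbr : ∀ (s t : W) (v : V), B (br s t) v = bW (cl v s) t)
    (v : V) (hv : B v v ≠ 0) :
    Function.Bijective (fun s : W => cl v s) ∧
    Function.Bijective (fun u : V => (ε * B v v) • u - (2 * (ε * B v u)) • v) ∧
    (∀ s t : W, br (cl v s) (cl v t) =
      (ε * B v v) • br s t - (2 * (ε * B v (br s t))) • v) := by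
  have hε2 : ε * ε = 1 := by rcases hε with rfl | rfl <;> ring
  -- polarized Clifford relation
  have hpol : ∀ (u w : V) (s : W),
      cl u (cl w s) + cl w (cl u s) = -((2 : K) * B u w) • s := by
    intro u w s
    have h := hcl (u + w) s
    simp only [map_add, LinearMap.add_apply, hcl] at h
    rw [hBsymm w u] at h
    linear_combination (norm := module) h
  refine ⟨?_, ?_, ?_⟩
  · -- bijectivity of `cl v` on `W`
    refine Function.bijective_iff_has_inverse.mpr
      ⟨fun s => (-(B v v))⁻¹ • cl v s, fun s => ?_, fun s => ?_⟩
    · simp only [hcl, smul_smul]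
      match_scalars
      field_simp
    · simp only [map_smul, hcl, smul_smul]
      match_scalars
      field_simp
  · -- bijectivity of `ψ` on `V`
    have hff : ∀ u : V, (ε * B v v) • ((ε * B v v) • u - (2 * (ε * B v u)) • v)
        - (2 * (ε * B v ((ε * B v v) • u - (2 * (ε * B v u)) • v))) • v
        = (B v v * B v v) • u := by
      intro u
      simp only [map_sub, map_smul, smul_eq_mul]
      match_scalars
      · linear_combination (B v v * B v v) * hε2
      · ring
    refine Function.bijective_iff_has_inverse.mpr
      ⟨fun u => (B v v * B v v)⁻¹ • ((ε * B v v) • u - (2 * (ε * B v u)) • v),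
        fun u => ?_, fun u => ?_⟩
    · simp only [hff, smul_smul]
      rw [inv_mul_cancel₀ (mul_ne_zero hv hv), one_smul]
    · simp only [map_smul, map_sub, smul_eq_mul]
      match_scalars
      · field_simp
        linear_combination hε2
      · field_simp
        ring
  · -- bracket preservation
    intro s t
    have hstep : ∀ u : V, cl v (cl u (cl v s)) =
        (B v v) • cl u s - (2 * B v u) • cl v s := by
      intro u
      have h1 := hpol u v (cl v s)
      rw [hcl v s] at h1
      have h2 : cl u (-(B v v) • s) = -(B v v) • cl u s := map_smul _ _ _
      rw [hBsymm u v] at h1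
      linear_combination (norm := module) h1 - h2
    have key : ∀ u : V, B (br (cl v s) (cl v t)) u
        = B ((ε * B v v) • br s t - (2 * (ε * B v (br s t))) • v) u := by
      intro u
      have e1 := hbr (cl v s) (cl v t) u
      have e2 : bW (cl u (cl v s)) (cl v t) = ε * bW (cl v (cl u (cl v s))) t := by
        rw [hbWcl v (cl u (cl v s)) t, ← mul_assoc, hε2, one_mul]
      have e3 := congrArg (fun x => bW x t) (hstep u)
      simp only [map_sub, map_smul, LinearMap.sub_apply, LinearMap.smul_apply,
        smul_eq_mul] at e3
      have e4 := hbr s t u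
      have e5 := hbr s t v
      have e6 := hBsymm v (br s t)
      simp only [map_sub, map_smul, LinearMap.sub_apply, LinearMap.smul_apply,
        smul_eq_mul]
      rw [e1, e2, e3, hBsymm v u]
      linear_combination (-(ε * B v v)) * e4 + 2 * ε * B u v * e5 + 2 * ε * B u v * e6
    have := hBnd (br (cl v s) (cl v t) - ((ε * B v v) • br s t - (2 * (ε * B v (br s t))) • v))
      (by intro u; rw [map_sub, LinearMap.sub_apply, key u, sub_self])
    linear_combination (norm := module) (sub_eq_zero.mp this)
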